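/- Let ν be a normal weight on [0,1) and let f(z) = ∑_{n≥0} a_n z^n be analytic on the unit disk with a_n ≥ 0 for all n. Then f belongs to the normal weight Bloch space B_ν (i.e., sup_{z∈D} ν(|z|)|f'(z)| < ∞) if and only if sup_{n≥1} ν(1-1/n) ∑_{k=1}^n k a_k < ∞. Moreover, ‖f‖_{B_ν} is comparable to a_0 + sup_{n≥1} ν(1-1/n) ∑_{k=1}^n k a_k. -/

import Mathlib

open MeasureTheory Set Filter

/-- `g` is almost decreasing on `s`. -/
def AlmostDecreasingOn (g : ℝ → ℝ) (s : Set ℝ) : Prop :=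
  ∃ C > 0, ∀ x ∈ s, ∀ y ∈ s, x < y → g y ≤ C * g x

/-- `g` is almost increasing on `s`. -/
def AlmostIncreasingOn (g : ℝ → ℝ) (s : Set ℝ) : Prop :=
  ∃ C > 0, ∀ x ∈ s, ∀ y ∈ s, x < y → g x ≤ C * g y

/-- `ν` is a normal weight on `[0,1)` with exponents `a ≤ b`. -/
def IsNormal (ν : ℝ → ℝ) (a b : ℝ) : Prop :=
  0 < a ∧ a ≤ b ∧ (∀ s ∈ Ico (0:ℝ) 1, 0 < ν s) ∧ ContinuousOn ν (Ico 0 1) ∧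
  AlmostDecreasingOn (fun s => ν s / (1 - s ^ 2) ^ a) (Ico 0 1) ∧
  AlmostIncreasingOn (fun s => ν s / (1 - s ^ 2) ^ b) (Ico 0 1)

/-- Membership in the normal-weight Bloch space `B_ν`. -/
def MemBloch (ν : ℝ → ℝ) (f : ℂ → ℂ) : Prop :=
  DifferentiableOn ℂ f (Metric.ball 0 1) ∧
  BddAbove (Set.range fun z : Metric.ball (0:ℂ) 1 => ν ‖(z : ℂ)‖ * ‖deriv f z‖)

/-- The Bloch norm `|f(0)| + sup ν(|z|)|f'(z)|`. -/
noncomputable def blochNorm (ν : ℝ → ℝ) (f : ℂ → ℂ) : ℝ :=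
  ‖f 0‖ + ⨆ z : Metric.ball (0:ℂ) 1, ν ‖(z : ℂ)‖ * ‖deriv f z‖

/-- `ω̃(t) = ∫_0^t ds/ω(s)`. -/
noncomputable def tildeW (ω : ℝ → ℝ) (t : ℝ) : ℝ := ∫ s in (0:ℝ)..t, 1 / ω s

/-- The generalized integral type Hilbert operator `I_{μ,α+1}`. -/
noncomputable def intHilbert (μ : Measure ℝ) (α : ℝ) (f : ℂ → ℂ) (z : ℂ) : ℂ :=
  ∫ t in Ico (0:ℝ) 1, f (t : ℂ) / (1 - (t : ℂ) * z) ^ ((α : ℂ) + 1) ∂μ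

/-- The sublinear generalized integral type Hilbert operator. -/
noncomputable def tildeIntHilbert (μ : Measure ℝ) (α : ℝ) (f : ℂ → ℂ) (z : ℂ) : ℂ :=
  ∫ t in Ico (0:ℝ) 1, (‖f (t : ℂ)‖ : ℂ) / (1 - (t : ℂ) * z) ^ ((α : ℂ) + 1) ∂μ

/-- Boundedness of an operator from `B_{ν₁}` to `B_{ν₂}`. -/
def IsBddOp (ν₁ ν₂ : ℝ → ℝ) (T : (ℂ → ℂ) → ℂ → ℂ) : Prop :=
  ∃ C > 0, ∀ f, MemBloch ν₁ f → MemBloch ν₂ (T f) ∧ blochNorm ν₂ (T f) ≤ C * blochNorm ν₁ f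

/-- Compactness of an operator from `B_{ν₁}` to `B_{ν₂}` (sequential characterization). -/
def IsCompactOp (ν₁ ν₂ : ℝ → ℝ) (T : (ℂ → ℂ) → ℂ → ℂ) : Prop :=
  IsBddOp ν₁ ν₂ T ∧
  ∀ (h : ℕ → ℂ → ℂ) (M : ℝ), (∀ k, MemBloch ν₁ (h k) ∧ blochNorm ν₁ (h k) ≤ M) →
    TendstoLocallyUniformlyOn (fun k z => h k z) (fun _ => 0) atTop (Metric.ball (0:ℂ) 1) →
    Tendsto (fun k => blochNorm ν₂ (T (h k))) atTop (nhds 0)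


open Finset
namespace Stmt5Aux



/-- The coefficient partial sum `T n = ∑_{k=1}^n k c_k`. -/
noncomputable def T (c : ℕ → ℝ) (m : ℕ) : ℝ := ∑ k ∈ Finset.Icc 1 m, (k : ℝ) * c k

lemma T_nonneg {c : ℕ → ℝ} (hc : ∀ n, 0 ≤ c n) (m : ℕ) : 0 ≤ T c m :=
  Finset.sum_nonneg fun k _ => mul_nonneg (by positivity) (hc k)

lemma T_succ (c : ℕ → ℝ) (m : ℕ) : T c (m + 1) = T c m + ((m:ℝ)+1) * c (m+1) := by
  rw [T, T, Finset.sum_Icc_succ_top (by omega : 1 ≤ m + 1)]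
  push_cast; ring

lemma T_eq_range (c : ℕ → ℝ) (m : ℕ) :
    T c m = ∑ n ∈ Finset.range m, ((n:ℝ)+1) * c (n+1) := by
  induction m with
  | zero => simp [T]
  | succ m ih => rw [T_succ, Finset.sum_range_succ, ih]

/-- Abel-type identity. -/
lemma abel_identity (c : ℕ → ℝ) (r : ℝ) (N : ℕ) :
    ∑ n ∈ Finset.range N, ((n:ℝ)+1) * c (n+1) * r ^ n
      = (1 - r) * ∑ n ∈ Finset.range N, T c (n+1) * r ^ n + T c N * r ^ N := by
  induction N with
  | zero => simp [T]
  | succ N ih =>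
    rw [Finset.sum_range_succ, Finset.sum_range_succ, ih, T_succ]
    ring

lemma quarter_le (m : ℕ) : (1/4 : ℝ) ≤ (1 - 1/((m:ℝ)+1)) ^ m := by
  rcases Nat.eq_zero_or_pos m with rfl | hm
  · norm_num
  have hm0 : (0:ℝ) < m := by exact_mod_cast hm
  have h1 : (1 + 1/(m:ℝ)) ^ m ≤ Real.exp 1 := by
    have hb : (1 + 1/(m:ℝ)) ≤ Real.exp (1/(m:ℝ)) := by
      have := Real.add_one_le_exp (1/(m:ℝ)); linarith
    calc (1 + 1/(m:ℝ)) ^ m ≤ (Real.exp (1/(m:ℝ))) ^ m := by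
          exact pow_le_pow_left₀ (by positivity) hb m
      _ = Real.exp ((1/(m:ℝ)) * m) := by rw [← Real.exp_nat_mul]; ring_nf
      _ = Real.exp 1 := by congr 1; field_simp
  have h4 : (1 + 1/(m:ℝ)) ^ m ≤ 4 := h1.trans (by
    have := Real.exp_one_lt_d9; linarith)
  have hkey : (1 - 1/((m:ℝ)+1)) = (1 + 1/(m:ℝ))⁻¹ := by
    rw [inv_eq_one_div]
    field_simp
    ring
  rw [hkey, inv_pow, one_div, le_inv_comm₀ (by norm_num) (by positivity)]
  simpa using h4





lemma pow_succ_le_factorial_choose (n q : ℕ) :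
    ((n:ℝ)+1) ^ q ≤ (q.factorial : ℝ) * ((n+q).choose q : ℝ) := by
  have h1 : (n+1) ^ q ≤ (n+q).descFactorial q := by
    have := Nat.pow_sub_le_descFactorial (n+q) q
    simpa [Nat.add_sub_cancel, show n + q + 1 - q = n + 1 by omega] using this
  have h2 : (n+q).descFactorial q = q.factorial * (n+q).choose q :=
    Nat.descFactorial_eq_factorial_mul_choose _ _
  rw [h2] at h1
  exact_mod_cast h1

lemma sum_pow_mul_geom_le (q N : ℕ) {r : ℝ} (h0 : 0 ≤ r) (h1 : r < 1) :
    ∑ n ∈ Finset.range N, ((n:ℝ)+1) ^ q * r ^ n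
      ≤ (q.factorial : ℝ) * (1 / (1 - r) ^ (q + 1)) := by
  have hr : ‖r‖ < 1 := by rwa [Real.norm_eq_abs, abs_of_nonneg h0]
  have hs := hasSum_choose_mul_geometric_of_norm_lt_one (𝕜 := ℝ) q hr
  calc ∑ n ∈ Finset.range N, ((n:ℝ)+1) ^ q * r ^ n
      ≤ ∑ n ∈ Finset.range N, (q.factorial : ℝ) * (((n+q).choose q : ℝ) * r ^ n) := by
        apply Finset.sum_le_sum
        intro n _
        rw [← mul_assoc]
        exact mul_le_mul_of_nonneg_right (pow_succ_le_factorial_choose n q) (by positivity)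
    _ = (q.factorial : ℝ) * ∑ n ∈ Finset.range N, (((n+q).choose q : ℝ) * r ^ n) := by
        rw [Finset.mul_sum]
    _ ≤ (q.factorial : ℝ) * (1 / (1 - r) ^ (q + 1)) := by
        apply mul_le_mul_of_nonneg_left _ (by positivity)
        exact sum_le_hasSum _ (fun n _ => by positivity) hs

lemma sum_geom_le (N : ℕ) {r : ℝ} (h0 : 0 ≤ r) (h1 : r < 1) :
    ∑ n ∈ Finset.range N, r ^ n ≤ 1 / (1 - r) := by
  have hs := hasSum_geometric_of_lt_one h0 h1
  rw [one_div]
  exact sum_le_hasSum _ (fun n _ => by positivity) hs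

/-- Summability of the derivative series. -/
lemma summable_deriv_aux {c : ℕ → ℝ} (hc : ∀ n, 0 ≤ c n)
    (hsum : ∀ ρ : ℝ, 0 ≤ ρ → ρ < 1 → Summable (fun n => c n * ρ ^ n))
    {r : ℝ} (hr0 : 0 ≤ r) (hr1 : r < 1) :
    Summable (fun n : ℕ => ((n:ℝ)+1) * c (n+1) * r ^ n) := by
  set ρ : ℝ := (1+r)/2 with hρ
  have hρ0 : 0 < ρ := by rw [hρ]; linarith
  have hrρ : r < ρ := by rw [hρ]; linarith
  have hρ1 : ρ < 1 := by rw [hρ]; linarith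
  clear hρ
  clear_value ρ
  have hs := hsum ρ hρ0.le hρ1
  set B := ∑' n, c n * ρ ^ n with hB
  have hBle : ∀ n, c n * ρ ^ n ≤ B := fun n =>
    Summable.le_tsum hs n (fun m _ => by have := hc m; positivity)
  have ht1 : |r / ρ| < 1 := by
    rw [abs_of_nonneg (by positivity), div_lt_one hρ0]; exact hrρ
  have hsum2 : Summable (fun n : ℕ => ((n:ℝ)+1) * (r/ρ) ^ n) := by
    have h1 : Summable (fun n : ℕ => (n:ℝ) ^ 1 * (r/ρ) ^ n) :=
      summable_pow_mul_geometric_of_norm_lt_one 1 (by rwa [Real.norm_eq_abs])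
    have h2 : Summable (fun n : ℕ => (r/ρ) ^ n) :=
      summable_geometric_of_lt_one (by positivity) (by rw [div_lt_one hρ0]; exact hrρ)
    have := h1.add h2
    apply this.congr
    intro n; simp [pow_one]; ring
  apply Summable.of_nonneg_of_le (fun n => by have := hc (n+1); positivity) _
    (hsum2.mul_left (B/ρ))
  intro n
  have key : ((n:ℝ)+1) * c (n+1) * r ^ n
      = (c (n+1) * ρ ^ (n+1)) * (((n:ℝ)+1) * (r/ρ) ^ n) / ρ := by
    rw [div_pow]
    field_simp
    ring
  rw [key]
  rw [div_le_iff₀ hρ0] at *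
  calc (c (n+1) * ρ ^ (n+1)) * (((n:ℝ)+1) * (r/ρ) ^ n)
      ≤ B * (((n:ℝ)+1) * (r/ρ) ^ n) := by
        apply mul_le_mul_of_nonneg_right (hBle (n+1)) (by positivity)
    _ = B / ρ * (((n:ℝ)+1) * (r/ρ) ^ n) * ρ := by field_simp





/-- Real summability of `c n ρ^n` from the complex `HasSum` hypothesis. -/
lemma summable_real_aux {f : ℂ → ℂ} {c : ℕ → ℝ}
    (hf : ∀ z ∈ Metric.ball (0:ℂ) 1, HasSum (fun n : ℕ => (c n : ℂ) * z ^ n) (f z))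
    {ρ : ℝ} (h0 : 0 ≤ ρ) (h1 : ρ < 1) : Summable (fun n => c n * ρ ^ n) := by
  have hmem : (ρ:ℂ) ∈ Metric.ball (0:ℂ) 1 := by
    simp only [Metric.mem_ball, dist_zero_right, Complex.norm_real, Real.norm_eq_abs]
    rwa [abs_of_nonneg h0]
  have hs : Summable (fun n : ℕ => (c n : ℂ) * (ρ:ℂ) ^ n) := (hf _ hmem).summable
  have := hs.map Complex.reCLM Complex.continuous_re
  apply this.congr
  intro n
  simp only [Function.comp]
  push_cast
  norm_cast

/-- Derivative formula for the power series. -/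
lemma hasDerivAt_aux {f : ℂ → ℂ} {c : ℕ → ℝ} (hc : ∀ n, 0 ≤ c n)
    (hf : ∀ z ∈ Metric.ball (0:ℂ) 1, HasSum (fun n : ℕ => (c n : ℂ) * z ^ n) (f z))
    {z : ℂ} (hz : z ∈ Metric.ball (0:ℂ) 1) :
    HasDerivAt f (∑' n : ℕ, (((n:ℝ)+1) * c (n+1) : ℝ) * (z:ℂ) ^ n) z := by
  have hz1 : ‖z‖ < 1 := by simpa [Metric.mem_ball, dist_zero_right] using hz
  set ρ : ℝ := (1 + ‖z‖)/2 with hρdef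
  have h1 : 0 ≤ ‖z‖ := norm_nonneg z
  have hρ0 : 0 < ρ := by rw [hρdef]; linarith
  have hzρ : ‖z‖ < ρ := by rw [hρdef]; linarith
  have hρ1 : ρ < 1 := by rw [hρdef]; linarith
  clear hρdef
  clear_value ρ
  have hu : Summable (fun n : ℕ => ((n:ℝ)+1) * c (n+1) * ρ ^ n) :=
    summable_deriv_aux hc (fun ρ' h0 h1 => summable_real_aux hf h0 h1) hρ0.le hρ1
  have hnorm : ∀ (n : ℕ) (x : ℂ), ‖((((n:ℝ)+1) * c (n+1) : ℝ) : ℂ) * x ^ n‖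
      = ((n:ℝ)+1) * c (n+1) * ‖x‖ ^ n := by
    intro n x
    rw [norm_mul, norm_pow, Complex.norm_real, Real.norm_eq_abs,
      abs_of_nonneg (by have := hc (n+1); positivity)]
  have hball : Metric.ball (0:ℂ) ρ ⊆ Metric.ball (0:ℂ) 1 :=
    Metric.ball_subset_ball hρ1.le
  refine hasDerivAt_of_tendstoUniformlyOn (f := fun N w => ∑ k ∈ Finset.range (N+1), (c k : ℂ) * w ^ k)
    (f' := fun N w => ∑ n ∈ Finset.range N, ((((n:ℝ)+1) * c (n+1) : ℝ) : ℂ) * w ^ n)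
    (l := atTop) (g := f) (g' := fun w => ∑' n : ℕ, (((n:ℝ)+1) * c (n+1) : ℝ) * (w:ℂ) ^ n)
    (Metric.isOpen_ball (x := (0:ℂ)) (ε := ρ)) ?_ ?_ ?_ (by simpa [Metric.mem_ball, dist_zero_right] using hzρ)
  · -- uniform convergence of derivatives
    apply tendstoUniformlyOn_tsum_nat hu
    intro n x hx
    rw [hnorm]
    have hxρ : ‖x‖ ≤ ρ := by
      have : ‖x‖ < ρ := by simpa [Metric.mem_ball, dist_zero_right] using hx
      exact this.le
    have := hc (n+1)
    have hp : ‖x‖ ^ n ≤ ρ ^ n := pow_le_pow_left₀ (norm_nonneg x) hxρ n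
    exact mul_le_mul_of_nonneg_left hp (by positivity)
  · -- derivatives of partial sums
    apply Eventually.of_forall
    intro N x _
    have hterm : ∀ k : ℕ, HasDerivAt (fun w : ℂ => (c k : ℂ) * w ^ k)
        ((c k : ℂ) * ((k:ℂ) * x ^ (k-1))) x := by
      intro k
      exact (hasDerivAt_pow k x).const_mul _
    have hsum := HasDerivAt.fun_sum (fun k (_ : k ∈ Finset.range (N+1)) => hterm k)
    convert hsum using 1
    rw [Finset.sum_range_succ' (fun k => (c k : ℂ) * ((k:ℂ) * x ^ (k-1))) N]
    simp only [Nat.cast_zero, zero_mul, mul_zero, add_zero, Nat.cast_add, Nat.cast_one,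
      Nat.add_sub_cancel]
    apply Finset.sum_congr rfl
    intro n _
    push_cast
    ring
  · -- pointwise convergence
    intro x hx
    have := (hf x (hball hx)).tendsto_sum_nat
    exact this.comp (tendsto_add_atTop_nat 1)


/-- The real derivative series. -/
noncomputable def E (c : ℕ → ℝ) (r : ℝ) : ℝ := ∑' n : ℕ, ((n:ℝ)+1) * c (n+1) * r ^ n

lemma norm_deriv_le {f : ℂ → ℂ} {c : ℕ → ℝ} (hc : ∀ n, 0 ≤ c n)
    (hf : ∀ z ∈ Metric.ball (0:ℂ) 1, HasSum (fun n : ℕ => (c n : ℂ) * z ^ n) (f z))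
    {z : ℂ} (hz : z ∈ Metric.ball (0:ℂ) 1) : ‖deriv f z‖ ≤ E c ‖z‖ := by
  have hz1 : ‖z‖ < 1 := by simpa [Metric.mem_ball, dist_zero_right] using hz
  rw [(hasDerivAt_aux hc hf hz).deriv]
  have hsum : Summable (fun n : ℕ => ‖((((n:ℝ)+1) * c (n+1) : ℝ) : ℂ) * z ^ n‖) := by
    have hs : Summable (fun n : ℕ => ((n:ℝ)+1) * c (n+1) * ‖z‖ ^ n) :=
      summable_deriv_aux hc (fun ρ' h0 h1 => summable_real_aux hf h0 h1) (norm_nonneg z) hz1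
    apply hs.congr
    intro n
    rw [norm_mul, norm_pow, Complex.norm_real, Real.norm_eq_abs,
      abs_of_nonneg (by have := hc (n+1); positivity)]
  calc ‖∑' n : ℕ, ((((n:ℝ)+1) * c (n+1) : ℝ) : ℂ) * z ^ n‖
      ≤ ∑' n : ℕ, ‖((((n:ℝ)+1) * c (n+1) : ℝ) : ℂ) * z ^ n‖ := norm_tsum_le_tsum_norm hsum
    _ = E c ‖z‖ := by
        apply tsum_congr
        intro n
        rw [norm_mul, norm_pow, Complex.norm_real, Real.norm_eq_abs,
          abs_of_nonneg (by have := hc (n+1); positivity)]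

lemma norm_deriv_real {f : ℂ → ℂ} {c : ℕ → ℝ} (hc : ∀ n, 0 ≤ c n)
    (hf : ∀ z ∈ Metric.ball (0:ℂ) 1, HasSum (fun n : ℕ => (c n : ℂ) * z ^ n) (f z))
    {r : ℝ} (h0 : 0 ≤ r) (h1 : r < 1) : ‖deriv f (r:ℂ)‖ = E c r := by
  have hmem : (r:ℂ) ∈ Metric.ball (0:ℂ) 1 := by
    simp only [Metric.mem_ball, dist_zero_right, Complex.norm_real, Real.norm_eq_abs]
    rwa [abs_of_nonneg h0]
  rw [(hasDerivAt_aux hc hf hmem).deriv]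
  have : (∑' n : ℕ, ((((n:ℝ)+1) * c (n+1) : ℝ) : ℂ) * (r:ℂ) ^ n) = ((E c r : ℝ) : ℂ) := by
    rw [E, Complex.ofReal_tsum]
    apply tsum_congr
    intro n
    push_cast
    ring
  rw [this, Complex.norm_real, Real.norm_eq_abs, abs_of_nonneg]
  exact tsum_nonneg fun n => by have := hc (n+1); positivity

lemma sum_le_E {f : ℂ → ℂ} {c : ℕ → ℝ} (hc : ∀ n, 0 ≤ c n)
    (hf : ∀ z ∈ Metric.ball (0:ℂ) 1, HasSum (fun n : ℕ => (c n : ℂ) * z ^ n) (f z))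
    {r : ℝ} (h0 : 0 ≤ r) (h1 : r < 1) (N : ℕ) :
    ∑ n ∈ Finset.range N, ((n:ℝ)+1) * c (n+1) * r ^ n ≤ E c r := by
  apply Summable.sum_le_tsum
  · intro n _
    have := hc (n+1); positivity
  · exact summable_deriv_aux hc (fun ρ' ha hb => summable_real_aux hf ha hb) h0 h1

set_option maxHeartbeats 1000000 in
lemma normal_compare {ν : ℝ → ℝ} {a b : ℝ} (hν : IsNormal ν a b) :
    ∃ K ≥ 1, ∀ r ∈ Ico (0:ℝ) 1, ∀ n : ℕ, 1 ≤ n →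
      ν r ≤ K * (ν (1 - 1/(n:ℝ)) * (1 + ((n:ℝ) * (1-r)) ^ (Nat.ceil b))) := by
  obtain ⟨ha, hab, hpos, -, ⟨Cd, hCd, hd⟩, ⟨Ci, hCi, hi⟩⟩ := hν
  set q : ℕ := Nat.ceil b with hqdef
  have hb0 : 0 < b := lt_of_lt_of_le ha hab
  have hbq : b ≤ (q:ℝ) := Nat.le_ceil b
  set K : ℝ := max 1 (max Cd (Ci * 2 ^ q)) with hKdef
  have hKd : Cd ≤ K := le_trans (le_max_left _ _) (le_max_right _ _)
  have hKi2 : Ci * 2 ^ q ≤ K := le_trans (le_max_right _ _) (le_max_right _ _)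
  have hK1 : (1:ℝ) ≤ K := le_max_left _ _
  clear hqdef
  clear hKdef
  clear_value q K
  refine ⟨K, hK1, ?_⟩
  rintro r ⟨hr0, hr1⟩ n hn
  have hn0 : (0:ℝ) < n := by exact_mod_cast hn
  have hinv1 : 1/(n:ℝ) ≤ 1 := by rw [div_le_one hn0]; exact_mod_cast hn
  have hinvpos : (0:ℝ) < 1/(n:ℝ) := by positivity
  set s : ℝ := 1 - 1/(n:ℝ) with hsdef
  have hs0 : 0 ≤ s := by rw [hsdef]; linarith
  have hs1 : s < 1 := by rw [hsdef]; linarith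
  have hsn : 1 - 1/(n:ℝ) ≤ s := le_of_eq hsdef.symm
  have hsn' : s ≤ 1 - 1/(n:ℝ) := le_of_eq hsdef
  have h3 : (1:ℝ)/(n:ℝ) ≤ 1 - s^2 := by
    rw [hsdef]; nlinarith
  clear hsdef
  clear_value s
  have hsmem : s ∈ Ico (0:ℝ) 1 := ⟨hs0, hs1⟩
  have hrmem : r ∈ Ico (0:ℝ) 1 := ⟨hr0, hr1⟩
  have hνs := hpos s hsmem
  have hνr := hpos r hrmem
  have hr2 : (0:ℝ) < 1 - r ^ 2 := by nlinarith
  have hs2 : (0:ℝ) < 1 - s ^ 2 := by nlinarith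
  have hw : (0:ℝ) ≤ (n:ℝ) * (1-r) := by nlinarith
  have hX : (0:ℝ) ≤ ((n:ℝ) * (1-r)) ^ q := pow_nonneg hw q
  have hsb := Real.rpow_pos_of_pos hs2 b
  have hsa := Real.rpow_pos_of_pos hs2 a
  rcases lt_trichotomy r s with hlt | heq | hgt
  · -- r < s : use almost increasing with exponent b
    have key := hi r hrmem s hsmem hlt
    simp only at key
    rw [div_le_iff₀ (Real.rpow_pos_of_pos hr2 b)] at key
    have hn1r : 1 < (n:ℝ) * (1-r) := by
      have h5 : 1/(n:ℝ) < 1 - r := by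
        have : r < 1 - 1/(n:ℝ) := lt_of_lt_of_le hlt hsn'
        linarith
      calc (1:ℝ) = (n:ℝ) * (1/(n:ℝ)) := by field_simp
        _ < (n:ℝ) * (1-r) := by exact mul_lt_mul_of_pos_left h5 hn0
    have hw2 : (0:ℝ) ≤ 2 * ((n:ℝ) * (1-r)) := by linarith
    have stepA : (1 - r^2 : ℝ) ^ b ≤ (1 - s^2 : ℝ) ^ b * (2^q * ((n:ℝ) * (1-r))^q) := by
      have step1 : (1 - r^2 : ℝ) ^ b ≤ ((1 - s^2) * (2 * ((n:ℝ) * (1-r)))) ^ b := by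
        apply Real.rpow_le_rpow hr2.le _ hb0.le
        have h2 : (1 - r^2 : ℝ) ≤ 2 * (1 - r) := by nlinarith
        calc (1 - r^2 : ℝ) ≤ 2 * (1-r) := h2
          _ = (1/(n:ℝ)) * (2 * ((n:ℝ) * (1-r))) := by field_simp
          _ ≤ (1 - s^2) * (2 * ((n:ℝ) * (1-r))) := mul_le_mul_of_nonneg_right h3 hw2
      have step2 : ((1 - s^2) * (2 * ((n:ℝ) * (1-r)))) ^ b
          = (1 - s^2 : ℝ) ^ b * (2 * ((n:ℝ) * (1-r))) ^ b := Real.mul_rpow hs2.le hw2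
      have step3 : (2 * ((n:ℝ) * (1-r))) ^ b ≤ (2 * ((n:ℝ) * (1-r))) ^ (q:ℝ) :=
        Real.rpow_le_rpow_of_exponent_le (by linarith) hbq
      have step4 : (2 * ((n:ℝ) * (1-r))) ^ (q:ℝ) = 2^q * ((n:ℝ) * (1-r))^q := by
        rw [Real.rpow_natCast, mul_pow]
      calc (1 - r^2 : ℝ) ^ b ≤ ((1 - s^2) * (2 * ((n:ℝ) * (1-r)))) ^ b := step1
        _ = (1 - s^2 : ℝ) ^ b * (2 * ((n:ℝ) * (1-r))) ^ b := step2
        _ ≤ (1 - s^2 : ℝ) ^ b * (2 * ((n:ℝ) * (1-r))) ^ (q:ℝ) :=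
            mul_le_mul_of_nonneg_left step3 hsb.le
        _ = (1 - s^2 : ℝ) ^ b * (2^q * ((n:ℝ) * (1-r))^q) := by rw [step4]
    have hfac : (0:ℝ) ≤ Ci * (ν s / (1-s^2)^b) :=
      mul_nonneg hCi.le (div_nonneg hνs.le hsb.le)
    calc ν r ≤ Ci * (ν s / (1-s^2)^b) * (1-r^2)^b := key
      _ ≤ Ci * (ν s / (1-s^2)^b) * ((1-s^2)^b * (2^q * ((n:ℝ)*(1-r))^q)) :=
          mul_le_mul_of_nonneg_left stepA hfac
      _ = Ci * 2^q * (ν s * ((n:ℝ)*(1-r))^q) := by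
          field_simp
      _ ≤ Ci * 2^q * (ν s * (1 + ((n:ℝ)*(1-r))^q)) := by
          apply mul_le_mul_of_nonneg_left _ (by positivity)
          exact mul_le_mul_of_nonneg_left (by linarith) hνs.le
      _ ≤ K * (ν s * (1 + ((n:ℝ)*(1-r))^q)) := by
          apply mul_le_mul_of_nonneg_right hKi2
          exact mul_nonneg hνs.le (by linarith)
  · -- r = s
    have hνrs : ν r = ν s := by rw [heq]
    calc ν r = ν s := hνrs
      _ ≤ ν s * (1 + ((n:ℝ)*(1-r))^q) := by nlinarith
      _ ≤ K * (ν s * (1 + ((n:ℝ)*(1-r))^q)) := by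
          apply le_mul_of_one_le_left _ hK1
          exact mul_nonneg hνs.le (by linarith)
  · -- s < r : use almost decreasing with exponent a
    have key := hd s hsmem r hrmem hgt
    simp only at key
    rw [div_le_iff₀ (Real.rpow_pos_of_pos hr2 a)] at key
    have hmono : (1 - r^2 : ℝ)^a ≤ (1 - s^2 : ℝ)^a :=
      Real.rpow_le_rpow hr2.le (by nlinarith) ha.le
    have hfac : (0:ℝ) ≤ Cd * (ν s / (1-s^2)^a) :=
      mul_nonneg hCd.le (div_nonneg hνs.le hsa.le)
    calc ν r ≤ Cd * (ν s / (1-s^2)^a) * (1-r^2)^a := key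
      _ ≤ Cd * (ν s / (1-s^2)^a) * (1-s^2)^a := mul_le_mul_of_nonneg_left hmono hfac
      _ = Cd * ν s := by
          rw [mul_assoc, div_mul_cancel₀]
          exact ne_of_gt hsa
      _ ≤ K * ν s := mul_le_mul_of_nonneg_right hKd hνs.le
      _ ≤ K * (ν s * (1 + ((n:ℝ)*(1-r))^q)) := by
          apply mul_le_mul_of_nonneg_left _ (by linarith)
          nlinarith

lemma dir1 {ν : ℝ → ℝ} (hpos : ∀ s ∈ Ico (0:ℝ) 1, 0 < ν s)
    {f : ℂ → ℂ} {c : ℕ → ℝ} (hc : ∀ n, 0 ≤ c n)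
    (hf : ∀ z ∈ Metric.ball (0:ℂ) 1, HasSum (fun n : ℕ => (c n : ℂ) * z ^ n) (f z))
    (hbdd : BddAbove (Set.range fun z : Metric.ball (0:ℂ) 1 => ν ‖(z : ℂ)‖ * ‖deriv f z‖)) :
    ∀ n : ℕ, 1 ≤ n → ν (1 - 1/(n:ℝ)) * (∑ k ∈ Finset.Icc 1 n, (k:ℝ) * c k)
      ≤ 4 * ⨆ z : Metric.ball (0:ℂ) 1, ν ‖(z : ℂ)‖ * ‖deriv f z‖ := by
  intro n hn
  obtain ⟨m, rfl⟩ : ∃ m, n = m + 1 := ⟨n-1, by omega⟩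
  have hm1 : (0:ℝ) < (m:ℝ)+1 := by positivity
  set r : ℝ := 1 - 1/((m:ℝ)+1) with hrdef
  have hinv1 : 1/((m:ℝ)+1) ≤ 1 := by
    rw [div_le_one hm1]; simp
  have hinvpos : (0:ℝ) < 1/((m:ℝ)+1) := by positivity
  have hr0 : 0 ≤ r := by rw [hrdef]; linarith
  have hr1 : r < 1 := by rw [hrdef]; linarith
  have hrq : (1/4:ℝ) ≤ r ^ m := quarter_le m
  have hcast : ((m+1:ℕ):ℝ) = (m:ℝ)+1 := by push_cast; ring
  have hz : (r:ℂ) ∈ Metric.ball (0:ℂ) 1 := by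
    simp only [Metric.mem_ball, dist_zero_right, Complex.norm_real, Real.norm_eq_abs]
    rwa [abs_of_nonneg hr0]
  have hEr : ‖deriv f (r:ℂ)‖ = E c r := norm_deriv_real hc hf hr0 hr1
  have hS : ν r * ‖deriv f (r:ℂ)‖ ≤ ⨆ z : Metric.ball (0:ℂ) 1, ν ‖(z : ℂ)‖ * ‖deriv f z‖ := by
    have := le_ciSup hbdd (⟨(r:ℂ), hz⟩ : Metric.ball (0:ℂ) 1)
    simpa [Complex.norm_real, Real.norm_eq_abs, abs_of_nonneg hr0] using this
  have hνr := hpos r ⟨hr0, hr1⟩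
  have hT : 0 ≤ T c (m+1) := T_nonneg hc (m+1)
  have hTE : T c (m+1) * r ^ m ≤ E c r := by
    rw [T_eq_range, Finset.sum_mul]
    calc ∑ i ∈ Finset.range (m+1), ((i:ℝ)+1) * c (i+1) * r ^ m
        ≤ ∑ i ∈ Finset.range (m+1), ((i:ℝ)+1) * c (i+1) * r ^ i := by
          apply Finset.sum_le_sum
          intro i hi
          apply mul_le_mul_of_nonneg_left _ (by have := hc (i+1); positivity)
          exact pow_le_pow_of_le_one hr0 hr1.le (Nat.lt_succ_iff.mp (Finset.mem_range.mp hi))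
      _ ≤ E c r := sum_le_E hc hf hr0 hr1 (m+1)
  have key : ν r * T c (m+1)
      ≤ 4 * (⨆ z : Metric.ball (0:ℂ) 1, ν ‖(z : ℂ)‖ * ‖deriv f z‖) := by
    have h1 : ν r * T c (m+1) ≤ 4 * (ν r * (T c (m+1) * r ^ m)) := by
      nlinarith [mul_nonneg (mul_nonneg hνr.le hT) (by linarith : (0:ℝ) ≤ 4 * r ^ m - 1)]
    have h2 : ν r * (T c (m+1) * r ^ m) ≤ ν r * E c r :=
      mul_le_mul_of_nonneg_left hTE hνr.le
    rw [← hEr] at h2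
    linarith
  rw [hcast]
  exact key

lemma dir2 {ν : ℝ → ℝ} {a b : ℝ} (hν : IsNormal ν a b) :
    ∃ C2 > 0, ∀ (f : ℂ → ℂ) (c : ℕ → ℝ), (∀ n, 0 ≤ c n) →
      (∀ z ∈ Metric.ball (0:ℂ) 1, HasSum (fun n : ℕ => (c n : ℂ) * z ^ n) (f z)) →
      ∀ M : ℝ, (∀ n : ℕ, 1 ≤ n → ν (1 - 1/(n:ℝ)) * ∑ k ∈ Finset.Icc 1 n, (k:ℝ) * c k ≤ M) →
      ∀ z ∈ Metric.ball (0:ℂ) 1, ν ‖z‖ * ‖deriv f z‖ ≤ C2 * M := by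
  obtain ⟨K, hK1, hcomp⟩ := normal_compare hν
  have hpos := hν.2.2.1
  set q : ℕ := Nat.ceil b with hqdef
  refine ⟨K * (1 + q.factorial), by positivity, ?_⟩
  intro f c hc hf M hM z hz
  have hr1 : ‖z‖ < 1 := by simpa [Metric.mem_ball, dist_zero_right] using hz
  set r : ℝ := ‖z‖ with hrdef
  have hr0 : 0 ≤ r := norm_nonneg z
  have hνr := hpos r ⟨hr0, hr1⟩
  have hM0 : 0 ≤ M := by
    have h1 := hM 1 le_rfl
    have h2 : (0:ℝ) ≤ ν (1 - 1/((1:ℕ):ℝ)) * ∑ k ∈ Finset.Icc (1:ℕ) 1, (k:ℝ) * c k := by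
      apply mul_nonneg (hpos _ (by norm_num)).le
      exact Finset.sum_nonneg fun k _ => mul_nonneg (by positivity) (hc k)
    linarith
  -- pointwise bound on ν r * T N
  have bound1 : ∀ N : ℕ, 1 ≤ N →
      ν r * T c N ≤ K * (1 + ((N:ℝ) * (1-r)) ^ q) * M := by
    intro N hN
    have hc1 := hcomp r ⟨hr0, hr1⟩ N hN
    have hT : 0 ≤ T c N := T_nonneg hc N
    have hX : (0:ℝ) ≤ ((N:ℝ) * (1-r)) ^ q :=
      pow_nonneg (mul_nonneg (by positivity) (by linarith)) q
    calc ν r * T c N ≤ (K * (ν (1 - 1/(N:ℝ)) * (1 + ((N:ℝ)*(1-r))^q))) * T c N :=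
          mul_le_mul_of_nonneg_right hc1 hT
      _ = (K * (1 + ((N:ℝ)*(1-r))^q)) * (ν (1 - 1/(N:ℝ)) * T c N) := by ring
      _ ≤ (K * (1 + ((N:ℝ)*(1-r))^q)) * M := by
          apply mul_le_mul_of_nonneg_left (hM N hN)
          exact mul_nonneg (by linarith) (by linarith)
      _ = K * (1 + ((N:ℝ)*(1-r))^q) * M := rfl
  -- bound on the partial Abel sums
  have hBsum : ∀ N : ℕ, (1-r) * (ν r * ∑ n ∈ Finset.range N, T c (n+1) * r ^ n)
      ≤ K * (1 + q.factorial) * M := by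
    intro N
    have hstep : ν r * ∑ n ∈ Finset.range N, T c (n+1) * r ^ n
        ≤ K * M * ((1 + q.factorial) / (1-r)) := by
      rw [Finset.mul_sum]
      have hterm : ∀ n ∈ Finset.range N, ν r * (T c (n+1) * r ^ n)
          ≤ K * M * ((1 + (((n:ℝ)+1) * (1-r)) ^ q) * r ^ n) := by
        intro n _
        have := bound1 (n+1) (by omega)
        rw [Nat.cast_add, Nat.cast_one] at this
        calc ν r * (T c (n+1) * r ^ n) = (ν r * T c (n+1)) * r ^ n := by ring
          _ ≤ (K * (1 + (((n:ℝ)+1)*(1-r))^q) * M) * r ^ n :=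
              mul_le_mul_of_nonneg_right this (by positivity)
          _ = K * M * ((1 + (((n:ℝ)+1) * (1-r)) ^ q) * r ^ n) := by ring
      calc ∑ n ∈ Finset.range N, ν r * (T c (n+1) * r ^ n)
          ≤ ∑ n ∈ Finset.range N, K * M * ((1 + (((n:ℝ)+1) * (1-r)) ^ q) * r ^ n) :=
            Finset.sum_le_sum hterm
        _ = K * M * ∑ n ∈ Finset.range N, ((1 + (((n:ℝ)+1) * (1-r)) ^ q) * r ^ n) := by
            rw [Finset.mul_sum]
        _ ≤ K * M * ((1 + q.factorial) / (1-r)) := by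
            apply mul_le_mul_of_nonneg_left _ (by positivity)
            have expand : ∀ n : ℕ, (1 + (((n:ℝ)+1) * (1-r)) ^ q) * r ^ n
                = r ^ n + (1-r)^q * (((n:ℝ)+1)^q * r ^ n) := by
              intro n; rw [mul_pow]; ring
            rw [Finset.sum_congr rfl (fun n _ => expand n), Finset.sum_add_distrib,
              ← Finset.mul_sum]
            have h1 : ∑ n ∈ Finset.range N, r ^ n ≤ 1/(1-r) := sum_geom_le N hr0 hr1
            have h2 : (1-r)^q * ∑ n ∈ Finset.range N, ((n:ℝ)+1)^q * r ^ n
                ≤ (q.factorial : ℝ) / (1-r) := by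
              have := sum_pow_mul_geom_le q N hr0 hr1
              have hne : ((1:ℝ)-r) ≠ 0 := by intro h; rw [sub_eq_zero] at h; linarith
              calc (1-r)^q * ∑ n ∈ Finset.range N, ((n:ℝ)+1)^q * r ^ n
                  ≤ (1-r)^q * ((q.factorial : ℝ) * (1 / (1-r)^(q+1))) :=
                    mul_le_mul_of_nonneg_left this (pow_nonneg (by linarith) q)
                _ = (q.factorial : ℝ) / (1-r) := by
                    have h0 : (0:ℝ) < 1 - r := by linarith
                    rw [pow_succ]
                    field_simp
            calc ∑ n ∈ Finset.range N, r ^ n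
                  + (1-r)^q * ∑ n ∈ Finset.range N, ((n:ℝ)+1)^q * r ^ n
                ≤ 1/(1-r) + (q.factorial : ℝ)/(1-r) := by linarith
              _ = (1 + q.factorial) / (1-r) := by ring
    calc (1-r) * (ν r * ∑ n ∈ Finset.range N, T c (n+1) * r ^ n)
        ≤ (1-r) * (K * M * ((1 + q.factorial) / (1-r))) :=
          mul_le_mul_of_nonneg_left hstep (by linarith)
      _ = K * M * ((1 + (q.factorial:ℝ)) / (1-r) * (1-r)) := by ring
      _ = K * M * (1 + (q.factorial:ℝ)) := by
          rw [div_mul_cancel₀ _ (by intro h; rw [sub_eq_zero] at h; linarith : ((1:ℝ)-r) ≠ 0)]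
      _ = K * (1 + q.factorial) * M := by ring
  -- tail tends to zero
  have htail : Tendsto (fun N : ℕ => ν r * (T c N * r ^ N)) atTop (nhds 0) := by
    have hu : Tendsto (fun N : ℕ => K * M * r ^ N + (K * M * (1-r)^q) * ((N:ℝ)^q * r ^ N))
        atTop (nhds 0) := by
      have hg : Tendsto (fun N : ℕ => r ^ N) atTop (nhds 0) :=
        tendsto_pow_atTop_nhds_zero_of_lt_one hr0 hr1
      have hp : Tendsto (fun N : ℕ => (N:ℝ)^q * r ^ N) atTop (nhds 0) := by
        have : Summable (fun N : ℕ => (N:ℝ)^q * r ^ N) :=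
          summable_pow_mul_geometric_of_norm_lt_one q
            (by rwa [Real.norm_eq_abs, abs_of_nonneg hr0])
        exact this.tendsto_atTop_zero
      have := (hg.const_mul (K * M)).add (hp.const_mul (K * M * (1-r)^q))
      simpa using this
    apply squeeze_zero'
    · exact Eventually.of_forall fun N => by
        have := T_nonneg hc N
        positivity
    · filter_upwards [eventually_ge_atTop 1] with N hN
      have h1 := bound1 N hN
      have hX : (0:ℝ) ≤ ((N:ℝ) * (1-r)) ^ q :=
        pow_nonneg (mul_nonneg (by positivity) (by linarith)) q
      calc ν r * (T c N * r ^ N) = (ν r * T c N) * r ^ N := by ring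
        _ ≤ (K * (1 + ((N:ℝ)*(1-r))^q) * M) * r ^ N :=
            mul_le_mul_of_nonneg_right h1 (by positivity)
        _ = K * M * r ^ N + (K * M * (1-r)^q) * ((N:ℝ)^q * r ^ N) := by
            rw [mul_pow]; ring
    · exact hu
  -- limit argument
  have hsummable : Summable (fun n : ℕ => ((n:ℝ)+1) * c (n+1) * r ^ n) :=
    summable_deriv_aux hc (fun ρ' ha hb => summable_real_aux hf ha hb) hr0 hr1
  have hA : Tendsto (fun N => ν r * ∑ n ∈ Finset.range N, ((n:ℝ)+1) * c (n+1) * r ^ n)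
      atTop (nhds (ν r * E c r)) :=
    (hsummable.hasSum.tendsto_sum_nat).const_mul (ν r)
  have hy : Tendsto (fun N : ℕ => K * (1 + q.factorial) * M + ν r * (T c N * r ^ N))
      atTop (nhds (K * (1 + q.factorial) * M)) := by
    simpa using (htail.const_add (K * (1 + q.factorial) * M))
  have hEbound : ν r * E c r ≤ K * (1 + q.factorial) * M := by
    apply le_of_tendsto_of_tendsto' hA hy
    intro N
    rw [abel_identity c r N]
    have := hBsum N
    calc ν r * ((1-r) * ∑ n ∈ Finset.range N, T c (n+1) * r ^ n + T c N * r ^ N)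
        = (1-r) * (ν r * ∑ n ∈ Finset.range N, T c (n+1) * r ^ n)
          + ν r * (T c N * r ^ N) := by ring
      _ ≤ K * (1 + q.factorial) * M + ν r * (T c N * r ^ N) := by linarith
  calc ν r * ‖deriv f z‖ ≤ ν r * E c r :=
        mul_le_mul_of_nonneg_left (norm_deriv_le hc hf hz) hνr.le
    _ ≤ K * (1 + q.factorial) * M := hEbound

end Stmt5Aux

open Stmt5Aux in
theorem stmt5 (ν : ℝ → ℝ) (a b : ℝ) (hν : IsNormal ν a b) :
    ∃ C > 0, ∀ (f : ℂ → ℂ) (c : ℕ → ℝ), (∀ n, 0 ≤ c n) →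
      (∀ z ∈ Metric.ball (0:ℂ) 1, HasSum (fun n : ℕ => (c n : ℂ) * z ^ n) (f z)) →
      ((MemBloch ν f ↔
          ∃ M : ℝ, ∀ n : ℕ, 1 ≤ n →
            ν (1 - 1 / (n:ℝ)) * ∑ k ∈ Finset.Icc 1 n, (k : ℝ) * c k ≤ M)
        ∧ (MemBloch ν f →
            blochNorm ν f ≤
              C * (c 0 + ⨆ n : ℕ, ν (1 - 1 / ((n:ℝ) + 1)) *
                ∑ k ∈ Finset.Icc 1 (n + 1), (k : ℝ) * c k)
            ∧ c 0 + (⨆ n : ℕ, ν (1 - 1 / ((n:ℝ) + 1)) *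
                ∑ k ∈ Finset.Icc 1 (n + 1), (k : ℝ) * c k) ≤ C * blochNorm ν f)) := by
  obtain ⟨C2, hC2pos, hC2⟩ := dir2 hν
  have hpos := hν.2.2.1
  refine ⟨5 + C2, by positivity, ?_⟩
  intro f c hc hf
  have hdiff : DifferentiableOn ℂ f (Metric.ball 0 1) := fun z hz =>
    (hasDerivAt_aux hc hf hz).differentiableAt.differentiableWithinAt
  have hnf0 : ‖f 0‖ = c 0 := by
    have h1 := hf 0 (by simp)
    have h2 : HasSum (fun n : ℕ => (c n : ℂ) * 0 ^ n) ((c 0 : ℂ)) := by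
      have := hasSum_single (f := fun n : ℕ => (c n : ℂ) * 0 ^ n) 0
        (fun b hb => by simp [zero_pow hb])
      simpa using this
    rw [h1.unique h2, Complex.norm_real, Real.norm_eq_abs, abs_of_nonneg (hc 0)]
  constructor
  · constructor
    · intro hmem
      exact ⟨4 * ⨆ z : Metric.ball (0:ℂ) 1, ν ‖(z : ℂ)‖ * ‖deriv f z‖,
        dir1 hpos hc hf hmem.2⟩
    · rintro ⟨M, hM⟩
      refine ⟨hdiff, ⟨C2 * M, ?_⟩⟩
      rintro x ⟨z, rfl⟩
      exact hC2 f c hc hf M hM z z.2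
  · intro hmem
    set S := ⨆ z : Metric.ball (0:ℂ) 1, ν ‖(z : ℂ)‖ * ‖deriv f z‖ with hSdef
    have hbdd := hmem.2
    have h0mem : ((0:ℂ)) ∈ Metric.ball (0:ℂ) 1 := by simp
    haveI : Nonempty ↥(Metric.ball (0:ℂ) 1) := ⟨⟨0, h0mem⟩⟩
    have hS0 : 0 ≤ S := by
      refine le_trans ?_ (le_ciSup hbdd (⟨0, h0mem⟩ : Metric.ball (0:ℂ) 1))
      simp only [norm_zero]
      exact mul_nonneg (hpos 0 (by norm_num)).le (norm_nonneg _)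
    have hub := dir1 hpos hc hf hbdd
    have hub' : ∀ n : ℕ, ν (1 - 1/((n:ℝ)+1)) * ∑ k ∈ Finset.Icc 1 (n+1), (k:ℝ) * c k
        ≤ 4 * S := by
      intro n
      have := hub (n+1) (by omega)
      rwa [Nat.cast_add, Nat.cast_one] at this
    have hNbdd : BddAbove (Set.range fun n : ℕ =>
        ν (1 - 1/((n:ℝ)+1)) * ∑ k ∈ Finset.Icc 1 (n+1), (k:ℝ) * c k) := by
      refine ⟨4 * S, ?_⟩
      rintro x ⟨n, rfl⟩
      exact hub' n
    set NS := ⨆ n : ℕ, ν (1 - 1/((n:ℝ)+1)) * ∑ k ∈ Finset.Icc 1 (n+1), (k:ℝ) * c k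
      with hNSdef
    have hNS0 : 0 ≤ NS := by
      refine le_trans ?_ (le_ciSup hNbdd 0)
      simp only [Nat.cast_zero]
      apply mul_nonneg (hpos _ (by norm_num)).le
      exact Finset.sum_nonneg fun k _ => mul_nonneg (by positivity) (hc k)
    have hNS4S : NS ≤ 4 * S := ciSup_le hub'
    have hSNS : S ≤ C2 * NS := by
      apply ciSup_le
      rintro ⟨z, hz⟩
      apply hC2 f c hc hf NS _ z hz
      intro n hn
      obtain ⟨m, rfl⟩ : ∃ m, n = m + 1 := ⟨n-1, by omega⟩
      have := le_ciSup hNbdd m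
      rw [Nat.cast_add, Nat.cast_one]
      exact this
    have hbloch : blochNorm ν f = c 0 + S := by
      unfold blochNorm
      rw [hnf0, hSdef]
    constructor
    · rw [hbloch]
      have e1 : (5 + C2) * (c 0 + NS) = 5*(c 0) + C2*(c 0) + 5*NS + C2*NS := by ring
      have e2 : (0:ℝ) ≤ C2 * c 0 := mul_nonneg hC2pos.le (hc 0)
      linarith [hc 0, hNS0, hSNS]
    · rw [hbloch]
      have e1 : (5 + C2) * (c 0 + S) = 5*(c 0) + C2*(c 0) + 5*S + C2*S := by ring
      have e2 : (0:ℝ) ≤ C2 * c 0 := mul_nonneg hC2pos.le (hc 0)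
      have e3 : (0:ℝ) ≤ C2 * S := mul_nonneg hC2pos.le hS0
      linarith [hc 0, hS0, hNS4S]
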